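/- Let u and û be two utility functions on the same finite normal-form game structure and let ε ≥ 0. If |u_p(s) − û_p(s)| ≤ ε for every player p and every pure strategy profile s, then for every γ ≥ 0 it holds that E°_γ(u) ⊆ E°_{2ε+γ}(û) and E°_γ(û) ⊆ E°_{2ε+γ}(u). -/

import Mathlib

/-- Expected utility of player `p` under a mixed strategy profile `σ`
(each `σ i : S i → ℝ` is a distribution over player `i`'s pure strategies). -/
noncomputable def expUtil {ι : Type*} {S : ι → Type*} [DecidableEq ι] [Fintype ι]
    [∀ i, Fintype (S i)]
    (u : ι → (∀ q, S q) → ℝ) (p : ι) (σ : ∀ i, S i → ℝ) : ℝ :=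
  ∑ s : ∀ q, S q, (∏ q, σ q (s q)) * u p s

/-- Regret of player `p` at mixed strategy profile `σ` under utility function `u`:
the gap between the best pure deviation of `p` and the current expected utility. -/
noncomputable def RegM {ι : Type*} {S : ι → Type*} [DecidableEq ι] [Fintype ι]
    [∀ i, Fintype (S i)] [∀ i, Nonempty (S i)] [∀ i, DecidableEq (S i)]
    (u : ι → (∀ q, S q) → ℝ) (p : ι) (σ : ∀ i, S i → ℝ) : ℝ :=
  (⨆ t : S p,
      expUtil u p (Function.update σ p (fun t' => if t' = t then (1 : ℝ) else 0))) -
    expUtil u p σ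

/-- `σ` is a valid mixed strategy profile: nonnegative weights summing to one
for each player. -/
def IsMixed {ι : Type*} {S : ι → Type*} [∀ i, Fintype (S i)]
    (σ : ∀ i, S i → ℝ) : Prop :=
  (∀ i t, 0 ≤ σ i t) ∧ ∀ i, ∑ t, σ i t = 1

/-- The set of `γ`-mixed Nash equilibria of the utility function `u`. -/
noncomputable def MNE {ι : Type*} {S : ι → Type*} [DecidableEq ι] [Fintype ι]
    [∀ i, Fintype (S i)] [∀ i, Nonempty (S i)] [∀ i, DecidableEq (S i)]
    (u : ι → (∀ q, S q) → ℝ) (γ : ℝ) : Set (∀ i, S i → ℝ) :=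
  {σ | IsMixed σ ∧ ∀ p, RegM u p σ ≤ γ}

/-- If all utilities are estimated to within `ε`, then for every `γ ≥ 0`,
`E°_γ(u) ⊆ E°_{2ε+γ}(û)` and `E°_γ(û) ⊆ E°_{2ε+γ}(u)`. -/
theorem mixed_dual_containment {ι : Type*} {S : ι → Type*}
    [DecidableEq ι] [Fintype ι] [Nonempty ι]
    [∀ i, Fintype (S i)] [∀ i, Nonempty (S i)] [∀ i, DecidableEq (S i)]
    (u uh : ι → (∀ q, S q) → ℝ) (ε : ℝ) (hε : 0 ≤ ε)
    (h : ∀ (p : ι) (s : ∀ q, S q), |u p s - uh p s| ≤ ε) :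
    ∀ γ : ℝ, 0 ≤ γ →
      MNE u γ ⊆ MNE uh (2 * ε + γ) ∧ MNE uh γ ⊆ MNE u (2 * ε + γ) := by
  -- auxiliary: expected utilities are ε-close for mixed profiles
  have expClose : ∀ (u uh : ι → (∀ q, S q) → ℝ),
      (∀ (p : ι) (s : ∀ q, S q), |u p s - uh p s| ≤ ε) →
      ∀ (p : ι) (σ : ∀ i, S i → ℝ), IsMixed σ →
      |expUtil u p σ - expUtil uh p σ| ≤ ε := by
    intro u uh h p σ hσ
    have hw : ∀ s : ∀ q, S q, 0 ≤ ∏ q, σ q (s q) := fun s =>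
      Finset.prod_nonneg fun q _ => hσ.1 q (s q)
    have hsum : ∑ s : ∀ q, S q, ∏ q, σ q (s q) = 1 := by
      rw [← Fintype.piFinset_univ, ← Finset.prod_univ_sum]
      simp [hσ.2]
    have : expUtil u p σ - expUtil uh p σ
        = ∑ s : ∀ q, S q, (∏ q, σ q (s q)) * (u p s - uh p s) := by
      simp [expUtil, ← Finset.sum_sub_distrib, mul_sub]
    rw [this]
    calc |∑ s : ∀ q, S q, (∏ q, σ q (s q)) * (u p s - uh p s)|
        ≤ ∑ s : ∀ q, S q, |(∏ q, σ q (s q)) * (u p s - uh p s)| :=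
          Finset.abs_sum_le_sum_abs _ _
      _ ≤ ∑ s : ∀ q, S q, (∏ q, σ q (s q)) * ε := by
          apply Finset.sum_le_sum
          intro s _
          rw [abs_mul, abs_of_nonneg (hw s)]
          exact mul_le_mul_of_nonneg_left (h p s) (hw s)
      _ = ε := by rw [← Finset.sum_mul, hsum, one_mul]
  -- auxiliary: regrets are 2ε-close
  have regClose : ∀ (u uh : ι → (∀ q, S q) → ℝ),
      (∀ (p : ι) (s : ∀ q, S q), |u p s - uh p s| ≤ ε) →
      ∀ (p : ι) (σ : ∀ i, S i → ℝ), IsMixed σ →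
      RegM uh p σ ≤ RegM u p σ + 2 * ε := by
    intro u uh h p σ hσ
    have hupd : ∀ t : S p,
        IsMixed (Function.update σ p (fun t' => if t' = t then (1 : ℝ) else 0)) := by
      intro t
      constructor
      · intro i t'
        by_cases hi : i = p
        · subst hi; simp [Function.update_self]
          split <;> norm_num
        · rw [Function.update_of_ne hi]; exact hσ.1 i t'
      · intro i
        by_cases hi : i = p
        · subst hi; simp [Function.update_self]
        · rw [Function.update_of_ne hi]; exact hσ.2 i
    have hε1 : ∀ t : S p,
        expUtil uh p (Function.update σ p (fun t' => if t' = t then (1 : ℝ) else 0))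
          ≤ expUtil u p (Function.update σ p (fun t' => if t' = t then (1 : ℝ) else 0)) + ε := by
      intro t
      have := expClose u uh h p _ (hupd t)
      rw [abs_sub_comm] at this
      linarith [(abs_le.mp this).2]
    have hε2 : expUtil u p σ ≤ expUtil uh p σ + ε := by
      have := expClose u uh h p σ hσ
      linarith [(abs_le.mp this).2]
    have hbdd : BddAbove (Set.range fun t : S p =>
        expUtil u p (Function.update σ p (fun t' => if t' = t then (1 : ℝ) else 0))) :=
      Set.Finite.bddAbove (Set.finite_range _)
    have hsup : (⨆ t : S p,
        expUtil uh p (Function.update σ p (fun t' => if t' = t then (1 : ℝ) else 0)))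
        ≤ (⨆ t : S p,
        expUtil u p (Function.update σ p (fun t' => if t' = t then (1 : ℝ) else 0))) + ε := by
      apply ciSup_le
      intro t
      exact (hε1 t).trans (add_le_add_left (le_ciSup hbdd t) ε)
    unfold RegM
    linarith
  intro γ hγ
  constructor
  · intro σ hσ
    refine ⟨hσ.1, fun p => ?_⟩
    have := regClose u uh h p σ hσ.1
    have h2 := hσ.2 p
    linarith
  · intro σ hσ
    refine ⟨hσ.1, fun p => ?_⟩
    have := regClose uh u (fun p s => by rw [abs_sub_comm]; exact h p s) p σ hσ.1
    have h2 := hσ.2 p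
    linarith
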